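/- Let u ∈ V and let (u_h, z_h) ∈ V_h × W_h satisfy the consistent discrete system: a_h(u_h, w) − s_W(z_h, w) = a_h(u, w) for all w ∈ W_h, and a_h(v, z_h) + s_V(u_h, v) = s_V(u, v) for all v ∈ V_h. Let i_V u ∈ V_h be given and set ρ := |(u − i_V u, 0)|_L. Assume the inf-sup stability with constant c_s > 0 (for every (ν, ζ) ∈ V_h × W_h there exists (v, w) ∈ V_h × W_h with |(v, w)|_L ≤ 1 and c_s·|(ν, ζ)|_L ≤ A_h[(ν, ζ), (v, w)]), the continuity bound a_h(u − i_V u, w) ≤ δ·|(0, w)|_L for all w ∈ W_h with δ ≥ 0, and the domination bounds |u − i_V u|_{s_V} ≤ C₁·ρ, |v|_{s_V} ≤ C₁·|(v, w)|_L for all (v, w) ∈ V_h × W_h, and |z_h|_{s_W} ≤ C₁·|(0, z_h)|_L. Assume further that η_V ≥ 0 satisfies η_V ≤ C₂·|(u_h − u, 0)|_L for some C₂ ≥ 0. Then the a posteriori quantity η := η_V + |z_h|_{s_W} satisfies the a priori bound η ≤ (C₁ + C₂)·(ρ + c_s^{-1}·(δ + C₁²·ρ)); in particular, if δ + ρ ≤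 C_V·h^t with C_V ≥ 0, h > 0, t ≥ 1, then η ≤ (C₁ + C₂)·max(1, C₁²)·(1 + c_s^{-1})·C_V·h^t. -/

import Mathlib

theorem bilin_cauchy {V : Type*} [AddCommGroup V] [Module ℝ V]
    (B : V →ₗ[ℝ] V →ₗ[ℝ] ℝ) (hsymm : ∀ x y, B x y = B y x)
    (hpos : ∀ x, 0 ≤ B x x) (x y : V) :
    B x y ≤ Real.sqrt (B x x) * Real.sqrt (B y y) := by
  have key : (B x y) ^ 2 ≤ B x x * B y y := by
    have h : ∀ t : ℝ, 0 ≤ (B x x) * (t * t) + (2 * B x y) * t + B y y := by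
      intro t
      have h0 := hpos (t • x + y)
      simp only [map_add, map_smul, LinearMap.add_apply, LinearMap.smul_apply,
        smul_eq_mul] at h0
      have h2 : (B x) x * (t * t) + 2 * (B x) y * t + (B y) y
          = t * (t * (B x) x + (B y) x) + (t * (B x) y + (B y) y) := by
        rw [hsymm y x]; ring
      linarith [h0, h2.ge, h2.le]
    have hd := discrim_le_zero h
    rw [discrim] at hd
    nlinarith
  calc B x y ≤ |B x y| := le_abs_self _
    _ = Real.sqrt ((B x y) ^ 2) := (Real.sqrt_sq_eq_abs _).symm
    _ ≤ Real.sqrt (B x x * B y y) := Real.sqrt_le_sqrt key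
    _ = Real.sqrt (B x x) * Real.sqrt (B y y) := Real.sqrt_mul (hpos x) _

theorem arith_helper (p d c C K : ℝ) (hp : 0 ≤ p) (hd : 0 ≤ d)
    (hc : 0 ≤ c) (hC : 0 ≤ C) (hK0 : 0 ≤ K) (hdp : d + p ≤ K) :
    p + c * (d + C ^ 2 * p) ≤ max 1 (C ^ 2) * (1 + c) * K := by
  have hM1 : 1 ≤ max 1 (C ^ 2) := le_max_left _ _
  have hM2 : C ^ 2 ≤ max 1 (C ^ 2) := le_max_right _ _
  set M := max 1 (C ^ 2)
  have a1 : p ≤ M * K := by nlinarith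
  have a2 : d + C ^ 2 * p ≤ M * K := by nlinarith
  nlinarith [mul_le_mul_of_nonneg_left a2 hc]

/-- A priori bound for the a posteriori quantity `η = η_V + |z_h|_{s_W}`
(equation (24) of the paper, abstract form). -/
theorem apriori_bound_for_aposteriori_quantity
    {V W : Type*} [NormedAddCommGroup V] [NormedSpace ℝ V]
    [NormedAddCommGroup W] [NormedSpace ℝ W]
    (Vh : Submodule ℝ V) (Wh : Submodule ℝ W)
    (ah : V →ₗ[ℝ] W →ₗ[ℝ] ℝ)
    (sV : V →ₗ[ℝ] V →ₗ[ℝ] ℝ) (sW : W →ₗ[ℝ] W →ₗ[ℝ] ℝ)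
    (hsVsymm : ∀ v₁ v₂ : V, sV v₁ v₂ = sV v₂ v₁)
    (hsVpos : ∀ v : V, 0 ≤ sV v v)
    (hsWsymm : ∀ w₁ w₂ : W, sW w₁ w₂ = sW w₂ w₁)
    (hsWpos : ∀ w : W, 0 ≤ sW w w)
    (L : Seminorm ℝ (V × W))
    (hL₁ : ∀ (v : V) (w : W), L (v, (0 : W)) ≤ L (v, w))
    (hL₂ : ∀ (v : V) (w : W), L ((0 : V), w) ≤ L (v, w))
    (u : V) (uh : V) (zh : W) (huh : uh ∈ Vh) (hzh : zh ∈ Wh)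
    -- the consistent discrete system
    (heq1 : ∀ w ∈ Wh, ah uh w - sW zh w = ah u w)
    (heq2 : ∀ v ∈ Vh, ah v zh + sV uh v = sV u v)
    (iVu : V) (hiVu : iVu ∈ Vh)
    (ρ : ℝ) (hρ : ρ = L (u - iVu, (0 : W)))
    -- inf-sup stability
    (cs : ℝ) (hcs : 0 < cs)
    (hinfsup : ∀ ν ∈ Vh, ∀ ζ ∈ Wh, ∃ v ∈ Vh, ∃ w ∈ Wh,
      L (v, w) ≤ 1 ∧ cs * L (ν, ζ) ≤ ah ν w - sW ζ w + ah v ζ + sV ν v)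
    -- continuity
    (δ : ℝ) (hδ : 0 ≤ δ)
    (hcont : ∀ w ∈ Wh, ah (u - iVu) w ≤ δ * L ((0 : V), w))
    -- domination
    (C₁ : ℝ) (hC₁ : 0 ≤ C₁)
    (hdom1 : Real.sqrt (sV (u - iVu) (u - iVu)) ≤ C₁ * ρ)
    (hdom2 : ∀ v ∈ Vh, ∀ w ∈ Wh, Real.sqrt (sV v v) ≤ C₁ * L (v, w))
    (hdom3 : Real.sqrt (sW zh zh) ≤ C₁ * L ((0 : V), zh))
    -- the a posteriori quantity is dominated by the error in the L-seminorm
    (ηV : ℝ) (hηV : 0 ≤ ηV)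
    (C₂ : ℝ) (hC₂ : 0 ≤ C₂)
    (hηVbound : ηV ≤ C₂ * L (uh - u, (0 : W))) :
    ηV + Real.sqrt (sW zh zh) ≤ (C₁ + C₂) * (ρ + cs⁻¹ * (δ + C₁ ^ 2 * ρ)) ∧
      ∀ CV h t : ℝ, 0 ≤ CV → 0 < h → 1 ≤ t → δ + ρ ≤ CV * h ^ t →
        ηV + Real.sqrt (sW zh zh) ≤
          (C₁ + C₂) * max 1 (C₁ ^ 2) * (1 + cs⁻¹) * CV * h ^ t := by
  have hρ0 : 0 ≤ ρ := hρ ▸ apply_nonneg L _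
  -- apply inf-sup to (uh - iVu, zh)
  obtain ⟨v, hv, w, hw, hLvw, hstab⟩ :=
    hinfsup (uh - iVu) (Vh.sub_mem huh hiVu) zh hzh
  have hLvw0 : 0 ≤ L (v, w) := apply_nonneg L _
  -- rewrite the stabilizing form using the consistent system
  have hkey : ah (uh - iVu) w - sW zh w + ah v zh + sV (uh - iVu) v
      = ah (u - iVu) w + sV (u - iVu) v := by
    have h1 := heq1 w hw
    have h2 := heq2 v hv
    simp only [map_sub, LinearMap.sub_apply] at *
    linarith
  -- bound the right-hand side
  have hrhs : ah (u - iVu) w + sV (u - iVu) v ≤ δ + C₁ ^ 2 * ρ := by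
    have h1 : ah (u - iVu) w ≤ δ * L ((0 : V), w) := hcont w hw
    have h2 : sV (u - iVu) v ≤
        Real.sqrt (sV (u - iVu) (u - iVu)) * Real.sqrt (sV v v) :=
      bilin_cauchy sV hsVsymm hsVpos _ _
    have h3 : Real.sqrt (sV v v) ≤ C₁ * L (v, w) := hdom2 v hv w hw
    have h4 : sV (u - iVu) v ≤ (C₁ * ρ) * (C₁ * L (v, w)) :=
      h2.trans (mul_le_mul hdom1 h3 (Real.sqrt_nonneg _)
        (by positivity))
    have h5 : L ((0 : V), w) ≤ L (v, w) := hL₂ v w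
    nlinarith [mul_nonneg hC₁ hρ0, mul_le_mul_of_nonneg_left hLvw
      (mul_nonneg (mul_nonneg hC₁ hρ0) hC₁), mul_le_mul_of_nonneg_left h5 hδ,
      mul_le_mul_of_nonneg_left hLvw hδ]
  have hstab' : cs * L (uh - iVu, zh) ≤ δ + C₁ ^ 2 * ρ := by
    rw [hkey] at hstab; linarith
  have hLe : L (uh - iVu, zh) ≤ cs⁻¹ * (δ + C₁ ^ 2 * ρ) := by
    have h := (le_div_iff₀' hcs).mpr hstab'
    rwa [div_eq_inv_mul] at h
  have hLe0 : 0 ≤ L (uh - iVu, zh) := apply_nonneg L _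
  -- triangle inequality
  have htri : L (uh - u, (0 : W)) ≤ L (uh - iVu, zh) + ρ := by
    have heqv : (uh - u, (0 : W)) = (uh - iVu, (0 : W)) + (-(u - iVu), (0 : W)) := by
      simp [Prod.ext_iff]
    calc L (uh - u, (0 : W))
        ≤ L (uh - iVu, (0 : W)) + L (-(u - iVu), (0 : W)) := by
          rw [heqv]; exact map_add_le_add L _ _
      _ = L (uh - iVu, (0 : W)) + L (u - iVu, (0 : W)) := by
          congr 1
          have : (-(u - iVu), (0 : W)) = -(u - iVu, (0 : W)) := by simp
          rw [this, map_neg_eq_map]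
      _ ≤ L (uh - iVu, zh) + ρ := by
          rw [hρ]; exact add_le_add_left (hL₁ _ _) _
  have hsWb : Real.sqrt (sW zh zh) ≤ C₁ * L (uh - iVu, zh) := by
    refine hdom3.trans ?_
    exact mul_le_mul_of_nonneg_left (hL₂ _ _) hC₁
  have hηVb : ηV ≤ C₂ * (L (uh - iVu, zh) + ρ) :=
    hηVbound.trans (mul_le_mul_of_nonneg_left htri hC₂)
  have main : ηV + Real.sqrt (sW zh zh) ≤ (C₁ + C₂) * (ρ + cs⁻¹ * (δ + C₁ ^ 2 * ρ)) := by
    have h6 : ηV + Real.sqrt (sW zh zh)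
        ≤ C₂ * ρ + (C₁ + C₂) * L (uh - iVu, zh) := by nlinarith
    have h7 : (C₁ + C₂) * L (uh - iVu, zh) ≤ (C₁ + C₂) * (cs⁻¹ * (δ + C₁ ^ 2 * ρ)) :=
      mul_le_mul_of_nonneg_left hLe (by linarith)
    nlinarith [mul_nonneg hC₁ hρ0]
  refine ⟨main, fun CV h t hCV hh ht hpow => ?_⟩
  refine main.trans ?_
  have hK0 : 0 ≤ CV * h ^ t := le_trans (by linarith) hpow
  have hinner := arith_helper ρ δ cs⁻¹ C₁ (CV * h ^ t) hρ0 hδ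
    (by positivity) hC₁ hK0 hpow
  calc (C₁ + C₂) * (ρ + cs⁻¹ * (δ + C₁ ^ 2 * ρ))
      ≤ (C₁ + C₂) * (max 1 (C₁ ^ 2) * (1 + cs⁻¹) * (CV * h ^ t)) :=
        mul_le_mul_of_nonneg_left hinner (by linarith)
    _ = (C₁ + C₂) * max 1 (C₁ ^ 2) * (1 + cs⁻¹) * CV * h ^ t := by ring
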